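/- If Q = Q₁ ∪ ... ∪ Q_N with each Q_i compact and strongly invariant, then P_int(f,Q) ≤ max_{1≤i≤N} P_int(f,Q_i). -/

import Mathlib

open Filter Topology
open scoped ENNReal

noncomputable section

/-- Solution map of the discrete-time control system `x_{k+1} = F(x_k, u_k)`. -/
def phi {X U : Type*} (F : X → U → X) : ℕ → X → (ℕ → U) → X
  | 0, x, _ => x
  | k + 1, x, ω => F (phi F k x ω) (ω k)

/-- Birkhoff-type sum of `f` along the first `n` control values. -/
def Snf {U : Type*} (f : U → ℝ) (n : ℕ) (ω : ℕ → U) : ℝ :=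
  ∑ i ∈ Finset.range n, f (ω i)

/-- `S` is a strongly `(n,Q)`-spanning set of control sequences. -/
def IsSpanningSet {X U : Type*} [TopologicalSpace X] (F : X → U → X) (Q : Set X) (n : ℕ)
    (S : Set (ℕ → U)) : Prop :=
  ∀ x ∈ Q, ∃ ω ∈ S, ∀ i, 1 ≤ i → i ≤ n → phi F i x ω ∈ interior Q

/-- `Q` is strongly invariant: every point of `Q` can be steered into the interior of `Q`. -/
def StronglyInvariant {X U : Type*} [TopologicalSpace X] (F : X → U → X) (Q : Set X) : Prop :=
  ∀ x ∈ Q, ∃ u, F x u ∈ interior Q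

/-- `a_n(f,Q)`: infimum over strongly `(n,Q)`-spanning (finite) sets `S` of
`∑_{ω ∈ S} exp ((S_n f)(ω))`. -/
def aInv {X U : Type*} [TopologicalSpace X] (F : X → U → X) (f : U → ℝ) (Q : Set X) (n : ℕ) :
    ℝ≥0∞ :=
  ⨅ (S : Finset (ℕ → U)) (_ : IsSpanningSet F Q n ↑S),
    ∑ ω ∈ S, ENNReal.ofReal (Real.exp (Snf f n ω))

/-- The inner invariance pressure `P_int(f,Q) = lim (1/n) log a_n(f,Q)` (as a limsup, with
values in the extended reals). -/
def Pinv {X U : Type*} [TopologicalSpace X] (F : X → U → X) (f : U → ℝ) (Q : Set X) : EReal :=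
  Filter.atTop.limsup fun n : ℕ => (((n : ℝ)⁻¹ : ℝ) : EReal) * ENNReal.log (aInv F f Q n)


private lemma sum_biUnion_le_aux {ι α : Type*} [DecidableEq ι] [DecidableEq α] (s : Finset ι)
    (t : ι → Finset α) (g : α → ℝ≥0∞) : ∑ x ∈ s.biUnion t, g x ≤ ∑ i ∈ s, ∑ x ∈ t i, g x := by
  induction s using Finset.induction_on with
  | empty => simp
  | insert _ _ h ih =>
    rename_i a s
    rw [Finset.biUnion_insert, Finset.sum_insert h]
    refine le_trans ?_ (add_le_add le_rfl ih)
    rw [← Finset.sum_union_inter]; exact self_le_add_right _ _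

private lemma aInv_union_le_sum {X U : Type*} [TopologicalSpace X] (F : X → U → X)
    (f : U → ℝ) {N : ℕ} (hN : 0 < N) (Q : Fin N → Set X) (n : ℕ) :
    aInv F f (⋃ i, Q i) n ≤ ∑ i : Fin N, aInv F f (Q i) n := by
  classical
  refine ENNReal.le_of_forall_pos_le_add fun ε hε hlt => ?_
  have hfin : ∀ i : Fin N, aInv F f (Q i) n ≠ ⊤ := fun i =>
    (ENNReal.sum_lt_top.1 hlt i (Finset.mem_univ i)).ne
  have hεN : (0 : NNReal) < ε / N := by positivity
  have key : ∀ i : Fin N, ∃ S : Finset (ℕ → U), IsSpanningSet F (Q i) n ↑S ∧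
      ∑ ω ∈ S, ENNReal.ofReal (Real.exp (Snf f n ω)) ≤ aInv F f (Q i) n + (ε / N : NNReal) := by
    intro i
    have hlt' : aInv F f (Q i) n < aInv F f (Q i) n + (ε / N : NNReal) :=
      ENNReal.lt_add_right (hfin i) (by exact_mod_cast hεN.ne')
    unfold aInv at hlt'
    rw [iInf_lt_iff] at hlt'
    obtain ⟨S, hS⟩ := hlt'
    rw [iInf_lt_iff] at hS
    obtain ⟨hSp, hSsum⟩ := hS
    exact ⟨S, hSp, hSsum.le⟩
  choose S hSp hSsum using key
  have hTspan : IsSpanningSet F (⋃ i, Q i) n ↑(Finset.univ.biUnion S) := by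
    intro x hx
    obtain ⟨i, hi⟩ := Set.mem_iUnion.1 hx
    obtain ⟨ω, hω, htraj⟩ := hSp i x hi
    exact ⟨ω, by simpa using Finset.mem_biUnion.2 ⟨i, Finset.mem_univ i, hω⟩,
      fun k hk1 hk2 => interior_mono (Set.subset_iUnion Q i) (htraj k hk1 hk2)⟩
  have h1 : aInv F f (⋃ i, Q i) n ≤
      ∑ ω ∈ Finset.univ.biUnion S, ENNReal.ofReal (Real.exp (Snf f n ω)) :=
    iInf_le_of_le (Finset.univ.biUnion S) (iInf_le _ hTspan)
  refine h1.trans ?_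
  refine (sum_biUnion_le_aux _ _ _).trans ?_
  refine (Finset.sum_le_sum fun i _ => hSsum i).trans ?_
  rw [Finset.sum_add_distrib, Finset.sum_const, Finset.card_univ, Fintype.card_fin,
    nsmul_eq_mul]
  refine add_le_add le_rfl (le_of_eq ?_)
  rw [ENNReal.coe_div (by exact_mod_cast hN.ne'), ENNReal.coe_natCast]
  exact ENNReal.mul_div_cancel (by exact_mod_cast hN.ne') (ENNReal.natCast_ne_top N)

private lemma ereal_mul_coe_add_le (t : EReal) {r : ℝ} (a : ℝ) (hr : 0 < r) :
    (r : EReal) * ((a : EReal) + t) ≤ ((r * a : ℝ) : EReal) + (r : EReal) * t := by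
  induction t with
  | bot => simp [EReal.coe_mul_bot_of_pos hr]
  | coe b => exact_mod_cast (mul_add r a b).le
  | top =>
    rw [EReal.add_top_of_ne_bot (EReal.coe_ne_bot a), EReal.coe_mul_top_of_pos hr,
      EReal.add_top_of_ne_bot (EReal.coe_ne_bot _)]

/-- If `Q = Q₁ ∪ ⋯ ∪ Q_N` with each `Q_i` compact and strongly invariant, then
`P_int(f,Q) ≤ max_i P_int(f,Q_i)`. -/
theorem pressure_union_le_max {X U : Type*} [MetricSpace X] [TopologicalSpace U]
    (F : X → U → X) (hF : ∀ u, Continuous fun x => F x u)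
    (N : ℕ) (hN : 0 < N) (Q : Fin N → Set X)
    (hQc : ∀ i, IsCompact (Q i)) (hQi : ∀ i, StronglyInvariant F (Q i))
    (hQu : IsCompact (⋃ i, Q i)) (hQuinv : StronglyInvariant F (⋃ i, Q i))
    (f : U → ℝ) (hf : Continuous f) :
    Pinv F f (⋃ i, Q i) ≤ ⨆ i, Pinv F f (Q i) := by
  classical
  have hNE : Nonempty (Fin N) := Fin.pos_iff_nonempty.1 hN
  refine le_of_forall_gt_imp_ge_of_dense fun c hc => ?_
  obtain ⟨d, hd1, hd2⟩ := exists_between hc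
  have hdbot : d ≠ ⊥ := (bot_le.trans_lt hd1).ne'
  by_cases hdtop : d = ⊤
  · exact absurd hd2 (by simp [hdtop])
  have hdd : d = (d.toReal : EReal) := (EReal.coe_toReal hdtop hdbot).symm
  have hev1 : ∀ i, ∀ᶠ n : ℕ in atTop,
      (((n : ℝ)⁻¹ : ℝ) : EReal) * ENNReal.log (aInv F f (Q i) n) < d :=
    fun i => eventually_lt_of_limsup_lt ((le_iSup (fun i => Pinv F f (Q i)) i).trans_lt hd1)
  have hev : ∀ᶠ n : ℕ in atTop,
      (((n : ℝ)⁻¹ : ℝ) : EReal) * ENNReal.log (aInv F f (⋃ i, Q i) n)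
        ≤ ((((n : ℝ)⁻¹ * Real.log N : ℝ)) : EReal) + d := by
    filter_upwards [eventually_all.2 hev1, eventually_ge_atTop 1] with n hn hn1
    have hr : (0 : ℝ) < (n : ℝ)⁻¹ := by
      have : (0 : ℝ) < n := by exact_mod_cast hn1
      positivity
    obtain ⟨j, -, hj⟩ := Finset.exists_max_image Finset.univ (fun i => aInv F f (Q i) n)
      ⟨Classical.arbitrary _, Finset.mem_univ _⟩
    have h2 : aInv F f (⋃ i, Q i) n ≤ (N : ℝ≥0∞) * aInv F f (Q j) n := by
      refine (aInv_union_le_sum F f hN Q n).trans ?_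
      calc ∑ i, aInv F f (Q i) n ≤ ∑ _i : Fin N, aInv F f (Q j) n :=
            Finset.sum_le_sum fun i _ => hj i (Finset.mem_univ i)
        _ = (N : ℝ≥0∞) * aInv F f (Q j) n := by
            rw [Finset.sum_const, Finset.card_univ, Fintype.card_fin, nsmul_eq_mul]
    have h3 : ENNReal.log (aInv F f (⋃ i, Q i) n)
        ≤ ((Real.log N : ℝ) : EReal) + ENNReal.log (aInv F f (Q j) n) := by
      refine (ENNReal.log_monotone h2).trans (le_of_eq ?_)
      rw [ENNReal.log_mul_add, ← ENNReal.ofReal_natCast,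
        ENNReal.log_ofReal_of_pos (by exact_mod_cast hN)]
    calc (((n : ℝ)⁻¹ : ℝ) : EReal) * ENNReal.log (aInv F f (⋃ i, Q i) n)
        ≤ (((n : ℝ)⁻¹ : ℝ) : EReal) *
            (((Real.log N : ℝ) : EReal) + ENNReal.log (aInv F f (Q j) n)) :=
          mul_le_mul_of_nonneg_left h3 (by exact_mod_cast hr.le)
      _ ≤ ((((n : ℝ)⁻¹ * Real.log N : ℝ)) : EReal) +
            (((n : ℝ)⁻¹ : ℝ) : EReal) * ENNReal.log (aInv F f (Q j) n) :=
          ereal_mul_coe_add_le _ _ hr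
      _ ≤ ((((n : ℝ)⁻¹ * Real.log N : ℝ)) : EReal) + d :=
          add_le_add le_rfl (hn j).le
  have hlim : Tendsto (fun n : ℕ => ((((n : ℝ)⁻¹ * Real.log N : ℝ)) : EReal) + d) atTop
      (𝓝 d) := by
    rw [hdd]
    simp only [← EReal.coe_add]
    rw [EReal.tendsto_coe]
    have h0 : Tendsto (fun n : ℕ => (n : ℝ)⁻¹ * Real.log N) atTop (𝓝 (0 * Real.log N)) :=
      tendsto_inv_atTop_nhds_zero_nat.mul_const _
    simpa using h0.add_const d.toReal
  have hfin : Pinv F f (⋃ i, Q i) ≤ d := by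
    unfold Pinv
    exact le_of_le_of_eq (limsup_le_limsup hev) hlim.limsup_eq
  exact hfin.trans hd2.le
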